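/- Let ã ≤ a in Z_{≥1}^3 and let f be the collapsing map defined by f(i) = i − b_j + b̃_j if b_j < i ≤ b_j + ã_{j+1} and f(i) = b̃_{j+1} if b_j + ã_{j+1} < i ≤ b_{j+1}. Given a representation M̃ of the quiver Q(ã) satisfying its relations, define a representation M of Q(a) by M_i = M̃_{f(i)}, with M_{α_i} the identity when f(i+1) = f(i), M_{α_i} = M̃_{α_{f(i)}} when f(i+1) = f(i)+1, and M_{β_{b_j}} = M̃_{β_{b̃_j}}. Then M satisfies the relations of Q(a): β_{b_1}α_{b_2−1}···α_{b_1} = 0 and α_{b_2−1}···α_{b_1}β_{b_1} = β_{b_2}α_{b_3−1}···α_{b_2}. -/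

import Mathlib

universe u v

/-- A representation of the quiver `Q(a)` for `a = (a1, a2, a3)`: vector spaces `V j` and
linear maps `α j : V j → V (j+1)`, `β₁ : V b₂ → V b₁`, `β₂ : V b₃ → V b₂`, where
`b₁ = a1`, `b₂ = a1 + a2`, `b₃ = a1 + a2 + a3` (only the vertices `1, …, b₃` are relevant). -/
structure QRep (k : Type u) [Field k] (a1 a2 a3 : ℕ) where
  V : ℕ → Type v
  [grp : ∀ j, AddCommGroup (V j)]
  [mod : ∀ j, Module k (V j)]
  α : ∀ j, V j →ₗ[k] V (j + 1)
  β1 : V (a1 + a2) →ₗ[k] V a1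
  β2 : V (a1 + a2 + a3) →ₗ[k] V (a1 + a2)

attribute [instance] QRep.grp QRep.mod

variable {k : Type u} [Field k] {a1 a2 a3 : ℕ}

/-- the composite `α_{u+len-1} ∘ ⋯ ∘ α_u : V u → V (u + len)`. -/
def pathMap (M : QRep k a1 a2 a3) (u : ℕ) : (len : ℕ) → (M.V u →ₗ[k] M.V (u + len))
  | 0 => LinearMap.id
  | (len + 1) => (M.α (u + len)).comp (pathMap M u len)

/-- the relation `β₁ ∘ α_{b₂-1} ∘ ⋯ ∘ α_{b₁} = 0`. -/
def Rel1 (M : QRep k a1 a2 a3) : Prop := M.β1.comp (pathMap M a1 a2) = 0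

/-- the relation `α_{b₂-1} ⋯ α_{b₁} ∘ β₁ = β₂ ∘ α_{b₃-1} ⋯ α_{b₂}`. -/
def Rel2 (M : QRep k a1 a2 a3) : Prop :=
  (pathMap M a1 a2).comp M.β1 = M.β2.comp (pathMap M (a1 + a2) a3)

/-- the vector space at vertex `j` of the standard module `Δ(i)`: it is `k` if `j ≥ i` and
`0` otherwise (realized as the submodules `⊤` resp. `⊥` of `k`). -/
def DeltaV (k : Type u) [Field k] (i j : ℕ) : Submodule k k := if i ≤ j then ⊤ else ⊥

/-- the standard module `Δ(i)`: the maps `α_j` act as the identity for `j ≥ i` (and are zero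
otherwise, the source being the zero space), and `β₁`, `β₂` act as zero. -/
def Delta (k : Type u) [Field k] (a1 a2 a3 i : ℕ) : QRep k a1 a2 a3 where
  V j := ↥(DeltaV k i j)
  grp := fun _ => inferInstance
  mod := fun _ => inferInstance
  α j := Submodule.inclusion (by
    unfold DeltaV
    split_ifs with h1 h2 <;> first | exact le_rfl | exact bot_le | omega)
  β1 := 0
  β2 := 0

/-- transport along an equality of vertices. -/
def castV (M : QRep k a1 a2 a3) {m n : ℕ} (h : m = n) : M.V m →ₗ[k] M.V n := by
  subst h; exact LinearMap.id

variable {c1 c2 c3 : ℕ}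

/-- The collapse of a representation `M` of `Q(ã)` (for `ã = (c1,c2,c3)`) along a
collapsing map `f` to a representation of `Q(a)` (for `a = (a1,a2,a3)`): the space at
vertex `i` is `M_{f(i)}`, `α_i` is the identity when `f(i+1) = f(i)` and `M_{α_{f(i)}}`
when `f(i+1) = f(i)+1`, and the `β`'s are those of `M`. -/
def collapse (M : QRep k c1 c2 c3) (a1 a2 a3 : ℕ) (f : ℕ → ℕ)
    (hstep : ∀ i, f (i + 1) = f i ∨ f (i + 1) = f i + 1)
    (hb1 : f a1 = c1) (hb2 : f (a1 + a2) = c1 + c2)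
    (hb3 : f (a1 + a2 + a3) = c1 + c2 + c3) : QRep k a1 a2 a3 where
  V i := M.V (f i)
  grp := fun i => M.grp (f i)
  mod := fun i => M.mod (f i)
  α i :=
    if h : f (i + 1) = f i then castV M h.symm
    else (castV M ((hstep i).resolve_left h).symm).comp (M.α (f i))
  β1 := (castV M hb1.symm).comp (M.β1.comp (castV M hb2))
  β2 := (castV M hb2.symm).comp (M.β2.comp (castV M hb3))

section Aux

lemma castV_comp' (M : QRep k c1 c2 c3) {m n p q : ℕ} (h1 : m = n) (h2 : n = p)
    (g : M.V q →ₗ[k] M.V m) :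
    (castV M h2).comp ((castV M h1).comp g) = (castV M (h1.trans h2)).comp g := by
  subst h1; subst h2; rfl

lemma castV_comp (M : QRep k c1 c2 c3) {m n p : ℕ} (h1 : m = n) (h2 : n = p) :
    (castV M h2).comp (castV M h1) = castV M (h1.trans h2) := by
  subst h1; subst h2; rfl

lemma castV_self (M : QRep k c1 c2 c3) {m : ℕ} (h : m = m) :
    castV M h = LinearMap.id := rfl

lemma alpha_castV (M : QRep k c1 c2 c3) {m n : ℕ} (h : m = n) :
    (M.α n).comp (castV M h) = (castV M (by rw [h])).comp (M.α m) := by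
  subst h; rfl

lemma pathMap_cast (M : QRep k c1 c2 c3) {u u' d d' : ℕ} (hu : u = u') (hd : d = d') :
    pathMap M u' d' =
      (castV M (by rw [hu, hd])).comp ((pathMap M u d).comp (castV M hu.symm)) := by
  subst hu; subst hd; rfl

lemma f_mono (f : ℕ → ℕ) (hstep : ∀ i, f (i + 1) = f i ∨ f (i + 1) = f i + 1)
    (u len : ℕ) : f u ≤ f (u + len) := by
  induction len with
  | zero => exact le_rfl
  | succ n ih => rcases hstep (u + n) with h | h <;> rw [← Nat.add_assoc, h] <;> omega

lemma collapse_path (M : QRep k c1 c2 c3) (a1 a2 a3 : ℕ) (f : ℕ → ℕ)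
    (hstep : ∀ i, f (i + 1) = f i ∨ f (i + 1) = f i + 1)
    (hb1 : f a1 = c1) (hb2 : f (a1 + a2) = c1 + c2)
    (hb3 : f (a1 + a2 + a3) = c1 + c2 + c3) (u len d : ℕ)
    (hd : f u + d = f (u + len)) :
    pathMap (collapse M a1 a2 a3 f hstep hb1 hb2 hb3) u len =
      (castV M hd).comp (pathMap M (f u) d) := by
  induction len generalizing d with
  | zero =>
    have h0 : d = 0 := by simp only [Nat.add_zero] at hd; omega
    subst h0
    rfl
  | succ n ih =>
    show ((collapse M a1 a2 a3 f hstep hb1 hb2 hb3).α (u + n)).comp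
      (pathMap (collapse M a1 a2 a3 f hstep hb1 hb2 hb3) u n) = _
    have hmono := f_mono f hstep u n
    rcases hstep (u + n) with h | h
    · have hd' : f u + d = f (u + n) := by
        have : f (u + (n + 1)) = f (u + n) := h
        omega
      rw [ih d hd']
      have hα : (collapse M a1 a2 a3 f hstep hb1 hb2 hb3).α (u + n) = castV M h.symm := by
        show dite _ _ _ = _
        exact dif_pos h
      rw [hα]
      exact castV_comp' M hd' h.symm _
    · have h1 : f (u + (n + 1)) = f (u + n) + 1 := h
      have hdpos : 1 ≤ d := by omega
      obtain ⟨e, rfl⟩ : ∃ e, d = e + 1 := ⟨d - 1, by omega⟩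
      have hd' : f u + e = f (u + n) := by omega
      rw [ih e hd']
      have h' : ¬ f (u + n + 1) = f (u + n) := by omega
      have hα : (collapse M a1 a2 a3 f hstep hb1 hb2 hb3).α (u + n) =
          (castV M ((hstep (u + n)).resolve_left h').symm).comp (M.α (f (u + n))) := by
        show dite _ _ _ = _
        exact dif_neg h'
      rw [hα]
      show ((castV M ((hstep (u + n)).resolve_left h').symm).comp (M.α (f (u + n)))).comp
        ((castV M hd').comp (pathMap M (f u) e)) = (castV M hd).comp (pathMap M (f u) (e + 1))
      rw [LinearMap.comp_assoc,
        ← LinearMap.comp_assoc (pathMap M (f u) e) (castV M hd') (M.α (f (u + n))),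
        alpha_castV M hd', LinearMap.comp_assoc, ← LinearMap.comp_assoc, castV_comp M]
      all_goals rfl

end Aux

/-- If `M` is a representation of `Q(ã)` satisfying the metabelian relations and `f` is the
collapsing map attached to `ã ≤ a` (given by its defining piecewise formula `hd0, …, hd2'`),
then the collapsed representation of `Q(a)` again satisfies the relations. -/
theorem stmt10 (ha1 : 1 ≤ a1) (ha2 : 1 ≤ a2) (ha3 : 1 ≤ a3)
    (hc1 : 1 ≤ c1) (hc2 : 1 ≤ c2) (hc3 : 1 ≤ c3)
    (hle1 : c1 ≤ a1) (hle2 : c2 ≤ a2) (hle3 : c3 ≤ a3)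
    (f : ℕ → ℕ)
    (hd0 : ∀ i, 0 < i → i ≤ c1 → f i = i)
    (hd0' : ∀ i, c1 < i → i ≤ a1 → f i = c1)
    (hd1 : ∀ i, a1 < i → i ≤ a1 + c2 → f i = i - a1 + c1)
    (hd1' : ∀ i, a1 + c2 < i → i ≤ a1 + a2 → f i = c1 + c2)
    (hd2 : ∀ i, a1 + a2 < i → i ≤ a1 + a2 + c3 → f i = i - (a1 + a2) + (c1 + c2))
    (hd2' : ∀ i, a1 + a2 + c3 < i → i ≤ a1 + a2 + a3 → f i = c1 + c2 + c3)
    (M : QRep k c1 c2 c3) (hM1 : Rel1 M) (hM2 : Rel2 M)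
    (hstep : ∀ i, f (i + 1) = f i ∨ f (i + 1) = f i + 1)
    (hb1 : f a1 = c1) (hb2 : f (a1 + a2) = c1 + c2)
    (hb3 : f (a1 + a2 + a3) = c1 + c2 + c3) :
    Rel1 (collapse M a1 a2 a3 f hstep hb1 hb2 hb3) ∧
    Rel2 (collapse M a1 a2 a3 f hstep hb1 hb2 hb3) := by
  have hM1' : M.β1.comp (pathMap M c1 c2) = 0 := hM1
  have hM2' : (pathMap M c1 c2).comp M.β1 = M.β2.comp (pathMap M (c1 + c2) c3) := hM2
  have hd2 : f a1 + c2 = f (a1 + a2) := by omega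
  have hd3 : f (a1 + a2) + c3 = f (a1 + a2 + a3) := by omega
  constructor
  · show ((castV M hb1.symm).comp (M.β1.comp (castV M hb2))).comp
      (pathMap (collapse M a1 a2 a3 f hstep hb1 hb2 hb3) a1 a2) = 0
    rw [collapse_path M a1 a2 a3 f hstep hb1 hb2 hb3 a1 a2 c2 hd2,
      pathMap_cast M hb1.symm (rfl : c2 = c2)]
    show ((castV M hb1.symm).comp (M.β1.comp (castV M hb2))).comp ((castV M hd2).comp
      ((castV M (m := c1 + c2) (n := f a1 + c2) (by rw [hb1])).comp
        ((pathMap M c1 c2).comp (castV M hb1)))) = 0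
    simp only [LinearMap.comp_assoc, castV_comp', castV_self, LinearMap.id_comp]
    rw [← LinearMap.comp_assoc _ (pathMap M c1 c2) M.β1, hM1']
    simp
  · show (pathMap (collapse M a1 a2 a3 f hstep hb1 hb2 hb3) a1 a2).comp
        ((castV M hb1.symm).comp (M.β1.comp (castV M hb2))) =
      ((castV M hb2.symm).comp (M.β2.comp (castV M hb3))).comp
        (pathMap (collapse M a1 a2 a3 f hstep hb1 hb2 hb3) (a1 + a2) a3)
    rw [collapse_path M a1 a2 a3 f hstep hb1 hb2 hb3 a1 a2 c2 hd2,
      collapse_path M a1 a2 a3 f hstep hb1 hb2 hb3 (a1 + a2) a3 c3 hd3,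
      pathMap_cast M hb1.symm (rfl : c2 = c2), pathMap_cast M hb2.symm (rfl : c3 = c3)]
    show ((castV M hd2).comp ((castV M (m := c1 + c2) (n := f a1 + c2) (by rw [hb1])).comp
        ((pathMap M c1 c2).comp (castV M hb1)))).comp
        ((castV M hb1.symm).comp (M.β1.comp (castV M hb2))) =
      ((castV M hb2.symm).comp (M.β2.comp (castV M hb3))).comp ((castV M hd3).comp
        ((castV M (m := c1 + c2 + c3) (n := f (a1 + a2) + c3) (by rw [hb2])).comp
        ((pathMap M (c1 + c2) c3).comp (castV M hb2))))
    simp only [LinearMap.comp_assoc, castV_comp', castV_self, LinearMap.id_comp]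
    rw [← LinearMap.comp_assoc _ M.β1 (pathMap M c1 c2), hM2']
    simp only [LinearMap.comp_assoc]
    all_goals rfl
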